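/- arXiv:2307.10535 — 2 statements merged into one kernel-verified Lean document; each statement's English description precedes it below -/
import Mathlib

section
/- Let (G,·,▷,Φ) be a twisted post group with sub-adjacent operation ∘, identity 1 of (G,·), and G_1 = {b∘e_1 | b∈G} where e_1 = (L_1^▷)^{-1}(Φ(1)^{-1}·1). Then Φ(G) = G_1; in particular the image of Φ is a group under ∘. -/
/-- A (left) twisted post group: a group `G` with a binary operation `tri` (written `▷`)
and a cocycle `phi` such that each left multiplication `tri a` is a group automorphism,
`(a ∘ b) ▷ c = a ▷ (b ▷ c)` and `Φ(a ∘ b) = a ∘ Φ(b)`, where `a ∘ b = Φ(a)·(a ▷ b)`. -/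
structure TPG (G : Type*) [Group G] where
  tri : G → G → G
  phi : G → G
  tri_mul : ∀ a b c : G, tri a (b * c) = tri a b * tri a c
  tri_bij : ∀ a : G, Function.Bijective (tri a)
  tri_assoc : ∀ a b c : G, tri (phi a * tri a b) c = tri a (tri b c)
  phi_comp : ∀ a b : G, phi (phi a * tri a b) = phi a * tri a (phi b)

namespace TPG

variable {G : Type*} [Group G] (T : TPG G)

/-- The sub-adjacent operation `a ∘ b = Φ(a)·(a ▷ b)`. -/
def circ (a b : G) : G := T.phi a * T.tri a b

/-- `e_a = (L_a^▷)⁻¹(Φ(a)⁻¹·a)`. -/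
noncomputable def e (a : G) : G := Function.invFun (T.tri a) ((T.phi a)⁻¹ * a)

/-- `a† = (L_a^▷)⁻¹(Φ(a)⁻¹·e_a)`. -/
noncomputable def dag (a : G) : G := Function.invFun (T.tri a) ((T.phi a)⁻¹ * T.e a)

end TPG

namespace TPG

variable {G : Type*} [Group G] (T : TPG G)

lemma tri_e (a : G) : T.tri a (T.e a) = (T.phi a)⁻¹ * a :=
  Function.rightInverse_invFun (T.tri_bij a).2 _

lemma tri_dag (a : G) : T.tri a (T.dag a) = (T.phi a)⁻¹ * T.e a :=
  Function.rightInverse_invFun (T.tri_bij a).2 _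

lemma circ_e (a : G) : T.circ a (T.e a) = a := by
  simp [circ, tri_e]

lemma circ_dag (a : G) : T.circ a (T.dag a) = T.e a := by
  simp [circ, tri_dag]

lemma circ_left_cancel {a b c : G} (h : T.circ a b = T.circ a c) : b = c := by
  apply (T.tri_bij a).1
  have := mul_left_cancel (a := T.phi a) h
  simpa [circ] using h

lemma circ_assoc (a b c : G) : T.circ (T.circ a b) c = T.circ a (T.circ b c) := by
  unfold circ
  rw [T.phi_comp, T.tri_assoc, T.tri_mul, mul_assoc]

lemma e_left_id (a b : G) : T.circ (T.e a) b = b := by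
  apply T.circ_left_cancel (a := a)
  rw [← circ_assoc, circ_e]

lemma tri_one (a : G) : T.tri a 1 = 1 := by
  have h := T.tri_mul a 1 1
  rw [mul_one] at h
  exact left_eq_mul.mp h

lemma phi_eq_circ_one (a : G) : T.phi a = T.circ a 1 := by
  simp [circ, tri_one]

lemma phi_dag_one : T.phi (T.dag 1) = T.e 1 := by
  apply T.circ_left_cancel (a := (1 : G))
  rw [phi_eq_circ_one, ← circ_assoc, circ_dag, e_left_id, circ_e]

end TPG

/-- `Φ(G) = G_1`, and the image of `Φ` is a group under `∘` with identity `e_1`,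
in which the inverse of `x` is `x†`. -/
theorem phi_range_eq_G1 {G : Type*} [Group G] (T : TPG G) :
    Set.range T.phi = {x : G | ∃ b : G, x = T.circ b (T.e 1)} ∧
    T.e 1 ∈ Set.range T.phi ∧
    (∀ x ∈ Set.range T.phi, T.circ x (T.e 1) = x ∧ T.circ (T.e 1) x = x) ∧
    (∀ x ∈ Set.range T.phi, T.dag x ∈ Set.range T.phi ∧
      T.circ x (T.dag x) = T.e 1 ∧ T.circ (T.dag x) x = T.e 1) := by
  -- e 1 is in the range of phi
  have e1_mem : T.e 1 ∈ Set.range T.phi := ⟨T.dag 1, T.phi_dag_one⟩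
  -- right identity on the range
  have right_id : ∀ x ∈ Set.range T.phi, T.circ x (T.e 1) = x := by
    rintro _ ⟨b, rfl⟩
    rw [T.phi_eq_circ_one, T.circ_assoc, T.circ_e]
  -- G1 ⊆ range
  have G1_sub : ∀ b : G, T.circ b (T.e 1) ∈ Set.range T.phi := by
    intro b
    refine ⟨T.circ b (T.dag 1), ?_⟩
    rw [T.phi_eq_circ_one, T.circ_assoc, ← T.phi_eq_circ_one, T.phi_dag_one]
  -- e_x = e_1 for x in the range
  have ex_eq : ∀ x ∈ Set.range T.phi, T.e x = T.e 1 := by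
    intro x hx
    exact T.circ_left_cancel (a := x) (by rw [T.circ_e, right_id x hx])
  refine ⟨?_, e1_mem, fun x hx => ⟨right_id x hx, T.e_left_id 1 x⟩, ?_⟩
  · ext x
    constructor
    · intro hx
      exact ⟨x, (right_id x hx).symm⟩
    · rintro ⟨b, rfl⟩
      exact G1_sub b
  · intro x hx
    have h1 : T.circ x (T.dag x) = T.e 1 := by rw [T.circ_dag, ex_eq x hx]
    have h2 : T.circ (T.dag x) x = T.e 1 := by
      apply T.circ_left_cancel (a := x)
      rw [← T.circ_assoc, h1, T.e_left_id, right_id x hx]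
    have h3 : T.circ (T.dag x) (T.e 1) = T.dag x := by
      apply T.circ_left_cancel (a := x)
      rw [← T.circ_assoc, h1, T.e_left_id]
    exact ⟨h3 ▸ G1_sub (T.dag x), h1, h2⟩
end

section
/- Let (G,·,▷,Φ) be a twisted post group with sub-adjacent operation ∘ and G_a = {b∘e_a | b∈G}. Then G is the disjoint union of the sets G_a over a∈G: every element of G lies in some G_a, and if G_a ∩ G_b ≠ ∅ then G_a = G_b. -/
section Aux

variable {G : Type*} [Group G] (T : TPG G)

lemma TPG.tri_one_s7 (a : G) : T.tri a 1 = 1 := by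
  have h := T.tri_mul a 1 1
  rw [one_mul] at h
  exact left_eq_mul.mp h

lemma TPG.tri_e_s7 (a : G) : T.tri a (T.e a) = (T.phi a)⁻¹ * a := by
  exact Function.rightInverse_invFun (T.tri_bij a).2 _

lemma TPG.circ_e_s7 (a : G) : T.circ a (T.e a) = a := by
  rw [TPG.circ, T.tri_e_s7, mul_inv_cancel_left]

lemma TPG.circ_assoc_s7 (a b c : G) : T.circ (T.circ a b) c = T.circ a (T.circ b c) := by
  simp only [TPG.circ]
  rw [T.phi_comp, T.tri_assoc, mul_assoc, T.tri_mul]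

lemma TPG.circ_inj (a : G) : Function.Injective (T.circ a) := by
  intro x y h
  simp only [TPG.circ] at h
  exact (T.tri_bij a).1 (mul_left_cancel h)

lemma TPG.e_unique {a x : G} (h : T.circ a x = a) : x = T.e a :=
  T.circ_inj a (h.trans (T.circ_e_s7 a).symm)

lemma TPG.e_circ (a b : G) : T.e (T.circ a b) = T.e b := by
  refine (T.e_unique ?_).symm
  rw [T.circ_assoc_s7, T.circ_e_s7]

lemma TPG.phi_e (a : G) : T.phi (T.e a) = 1 := by
  have h := T.phi_comp a (T.e a)
  have h2 : T.phi a * T.tri a (T.e a) = a := T.circ_e_s7 a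
  rw [h2] at h
  have : T.tri a (T.phi (T.e a)) = T.tri a 1 := by
    rw [T.tri_one_s7]
    exact mul_left_cancel (by rw [mul_one, ← h])
  exact (T.tri_bij a).1 this

lemma TPG.tri_e_id (a c : G) : T.tri (T.e a) c = c := by
  have h := T.tri_assoc a (T.e a) c
  have h2 : T.phi a * T.tri a (T.e a) = a := T.circ_e_s7 a
  rw [h2] at h
  exact ((T.tri_bij a).1 h.symm)

lemma TPG.e_e (a : G) : T.e (T.e a) = T.e a := by
  refine (T.e_unique ?_).symm
  rw [TPG.circ, T.phi_e, T.tri_e_id, one_mul]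

end Aux

/-- `G` is the disjoint union of the sets `G_a`, `a ∈ G`. -/
theorem disjoint_union {G : Type*} [Group G] (T : TPG G) :
    (∀ x : G, ∃ a : G, x ∈ {y : G | ∃ b : G, y = T.circ b (T.e a)}) ∧
    (∀ a b : G,
      ({y : G | ∃ c : G, y = T.circ c (T.e a)} ∩
        {y : G | ∃ c : G, y = T.circ c (T.e b)}).Nonempty →
      {y : G | ∃ c : G, y = T.circ c (T.e a)} =
        {y : G | ∃ c : G, y = T.circ c (T.e b)}) := by
  constructor
  · intro x
    exact ⟨x, x, (T.circ_e_s7 x).symm⟩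
  · intro a b ⟨y, ⟨c, hc⟩, ⟨d, hd⟩⟩
    have hab : T.e a = T.e b := by
      have h1 : T.e y = T.e a := by rw [hc, T.e_circ, T.e_e]
      have h2 : T.e y = T.e b := by rw [hd, T.e_circ, T.e_e]
      rw [← h1, h2]
    rw [hab]
end
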